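/- arXiv:1707.09393 — 3 statements merged into one kernel-verified Lean document; each statement's English description precedes it below -/
import Mathlib

section
/- For any k > 0 and any finite nonempty family of reals a_0,...,a_n, the derivative of k ↦ log(∑_i exp(k·a_i))/k is (1/k)·(∑_i a_i·p_i − log(∑_i exp(k·a_i))/k), where p_i = exp(k·a_i)/∑_j exp(k·a_j), and this derivative is nonpositive. -/
open Real Finset

theorem gsoft_deriv {ι : Type*} [Fintype ι] [Nonempty ι] (a : ι → ℝ)
    (k : ℝ) (hk : 0 < k) :
    HasDerivAt (fun t : ℝ => Real.log (∑ i, Real.exp (t * a i)) / t)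
      ((1 / k) * ((∑ i, a i * (Real.exp (k * a i) / ∑ j, Real.exp (k * a j))) -
        Real.log (∑ i, Real.exp (k * a i)) / k)) k ∧
    (1 / k) * ((∑ i, a i * (Real.exp (k * a i) / ∑ j, Real.exp (k * a j))) -
        Real.log (∑ i, Real.exp (k * a i)) / k) ≤ 0 := by
  have hS : 0 < ∑ j, Real.exp (k * a j) :=
    Finset.sum_pos (fun i _ => Real.exp_pos _) Finset.univ_nonempty
  set S := ∑ j, Real.exp (k * a j) with hSdef
  have hsum : (∑ i, a i * (Real.exp (k * a i) / S))
      = (∑ i, Real.exp (k * a i) * a i) / S := by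
    rw [Finset.sum_div]
    exact Finset.sum_congr rfl fun i _ => by ring
  constructor
  · have h1 : HasDerivAt (fun t : ℝ => ∑ i, Real.exp (t * a i))
        (∑ i, Real.exp (k * a i) * a i) k := by
      apply HasDerivAt.fun_sum
      intro i _
      simpa using (((hasDerivAt_id k).mul_const (a i)).exp)
    have h2 := h1.log (ne_of_gt hS)
    have h3 := h2.fun_div (hasDerivAt_id k) (ne_of_gt hk)
    convert h3 using 1
    · rfl
    · rfl
    · rfl
    rw [hsum]
    field_simp
    ring_nf
    have hk0 : k ≠ 0 := ne_of_gt hk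
    rw [← hSdef]
    simp only [id]
    field_simp
  · have hbound : ∀ i, a i ≤ Real.log S / k := by
      intro i
      rw [le_div_iff₀ hk, mul_comm, ← Real.log_exp (k * a i)]
      exact Real.log_le_log (Real.exp_pos _)
        (Finset.single_le_sum (f := fun j => Real.exp (k * a j)) (fun j _ => (Real.exp_pos _).le) (Finset.mem_univ i))
    have key : (∑ i, a i * (Real.exp (k * a i) / S)) ≤ Real.log S / k := by
      calc (∑ i, a i * (Real.exp (k * a i) / S))
          ≤ ∑ i, (Real.log S / k) * (Real.exp (k * a i) / S) :=
            Finset.sum_le_sum fun i _ => mul_le_mul_of_nonneg_right (hbound i)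
              (div_nonneg (Real.exp_pos _).le hS.le)
        _ = (Real.log S / k) * ((∑ i, Real.exp (k * a i)) / S) := by
            rw [← Finset.mul_sum, Finset.sum_div]
        _ = Real.log S / k := by rw [div_self (ne_of_gt hS), mul_one]
    have h1k : (0:ℝ) ≤ 1 / k := by positivity
    nlinarith [key, h1k]
end

section
/- Let S and A be finite nonempty sets, P a transition kernel with P(s'|s,a) ≥ 0 and ∑_{s'} P(s'|s,a) = 1, r : S → ℝ a reward, 0 ≤ γ < 1, and k > 0. Then the g-soft Bellman operator (TV)(s) = (1/k)·log(∑_{a∈A} exp(k·∑_{s'} P(s'|s,a)·(r(s') + γ·V(s')))) is a γ-contraction on ℝ^S with the sup norm, and hence has a unique fixed point. -/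
open Real Finset

lemma lse_le_aux {A : Type*} [Fintype A] [Nonempty A] (x y : A → ℝ) (c : ℝ)
    (h : ∀ a, x a ≤ y a + c) :
    Real.log (∑ a, Real.exp (x a)) ≤ Real.log (∑ a, Real.exp (y a)) + c := by
  have hx : (0:ℝ) < ∑ a, Real.exp (x a) :=
    Finset.sum_pos (fun a _ => Real.exp_pos _) Finset.univ_nonempty
  have hy : (0:ℝ) < ∑ a, Real.exp (y a) :=
    Finset.sum_pos (fun a _ => Real.exp_pos _) Finset.univ_nonempty
  have hsum : (∑ a, Real.exp (x a)) ≤ Real.exp c * ∑ a, Real.exp (y a) := by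
    rw [Finset.mul_sum]
    refine Finset.sum_le_sum fun a _ => ?_
    rw [← Real.exp_add]
    exact Real.exp_le_exp.2 (by linarith [h a])
  calc Real.log (∑ a, Real.exp (x a))
      ≤ Real.log (Real.exp c * ∑ a, Real.exp (y a)) := Real.log_le_log hx hsum
    _ = Real.log (∑ a, Real.exp (y a)) + c := by
        rw [Real.log_mul (Real.exp_ne_zero c) (ne_of_gt hy), Real.log_exp]; ring

lemma lse_abs_le {A : Type*} [Fintype A] [Nonempty A] (x y : A → ℝ) (c : ℝ)
    (h : ∀ a, |x a - y a| ≤ c) :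
    |Real.log (∑ a, Real.exp (x a)) - Real.log (∑ a, Real.exp (y a))| ≤ c := by
  rw [abs_sub_le_iff]
  constructor
  · have := lse_le_aux x y c (fun a => by have := abs_le.1 (h a); linarith [this.2])
    linarith
  · have := lse_le_aux y x c (fun a => by have := abs_le.1 (h a); linarith [this.1])
    linarith

theorem gsoft_bellman_contraction {S A : Type*} [Fintype S] [Nonempty S]
    [Fintype A] [Nonempty A]
    (P : S → A → S → ℝ) (hP0 : ∀ s a s', 0 ≤ P s a s')
    (hP1 : ∀ s a, ∑ s', P s a s' = 1)
    (r : S → ℝ) (γ : ℝ) (hγ0 : 0 ≤ γ) (hγ1 : γ < 1) (k : ℝ) (hk : 0 < k) :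
    (∀ V W : S → ℝ,
      ‖(fun s => (1 / k) * Real.log (∑ a : A,
          Real.exp (k * ∑ s', P s a s' * (r s' + γ * V s')))) -
       (fun s => (1 / k) * Real.log (∑ a : A,
          Real.exp (k * ∑ s', P s a s' * (r s' + γ * W s'))))‖ ≤ γ * ‖V - W‖) ∧
    (∃! V : S → ℝ, ∀ s,
      V s = (1 / k) * Real.log (∑ a : A,
        Real.exp (k * ∑ s', P s a s' * (r s' + γ * V s')))) := by
  set T : (S → ℝ) → (S → ℝ) := fun V s => (1 / k) * Real.log (∑ a : A,
      Real.exp (k * ∑ s', P s a s' * (r s' + γ * V s'))) with hT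
  have key : ∀ V W : S → ℝ, ‖T V - T W‖ ≤ γ * ‖V - W‖ := by
    intro V W
    have hnn : 0 ≤ γ * ‖V - W‖ := mul_nonneg hγ0 (norm_nonneg _)
    rw [pi_norm_le_iff_of_nonneg hnn]
    intro s
    have hpt : ∀ a, |k * (∑ s', P s a s' * (r s' + γ * V s')) -
        k * (∑ s', P s a s' * (r s' + γ * W s'))| ≤ k * (γ * ‖V - W‖) := by
      intro a
      rw [← mul_sub, abs_mul, abs_of_pos hk, ← Finset.sum_sub_distrib]
      have : ∀ s', P s a s' * (r s' + γ * V s') - P s a s' * (r s' + γ * W s')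
          = P s a s' * (γ * (V s' - W s')) := fun s' => by ring
      simp only [this]
      refine mul_le_mul_of_nonneg_left ?_ (le_of_lt hk)
      calc |∑ s', P s a s' * (γ * (V s' - W s'))|
          ≤ ∑ s', |P s a s' * (γ * (V s' - W s'))| := Finset.abs_sum_le_sum_abs _ _
        _ ≤ ∑ s', P s a s' * (γ * ‖V - W‖) := by
            refine Finset.sum_le_sum fun s' _ => ?_
            rw [abs_mul, abs_of_nonneg (hP0 s a s'), abs_mul, abs_of_nonneg hγ0]
            refine mul_le_mul_of_nonneg_left (mul_le_mul_of_nonneg_left ?_ hγ0) (hP0 s a s')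
            have := norm_le_pi_norm (V - W) s'
            simpa [Real.norm_eq_abs] using this
        _ = γ * ‖V - W‖ := by rw [← Finset.sum_mul, hP1 s a, one_mul]
    have hlse := lse_abs_le (fun a => k * ∑ s', P s a s' * (r s' + γ * V s'))
      (fun a => k * ∑ s', P s a s' * (r s' + γ * W s')) (k * (γ * ‖V - W‖)) hpt
    have heq : (T V - T W) s = (1 / k) * (Real.log (∑ a : A,
        Real.exp (k * ∑ s', P s a s' * (r s' + γ * V s'))) - Real.log (∑ a : A,
        Real.exp (k * ∑ s', P s a s' * (r s' + γ * W s')))) := by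
      simp only [hT, Pi.sub_apply]; ring
    rw [Real.norm_eq_abs, heq, abs_mul, abs_of_pos (by positivity : (0:ℝ) < 1/k)]
    calc (1 / k) * |_| ≤ (1 / k) * (k * (γ * ‖V - W‖)) :=
          mul_le_mul_of_nonneg_left hlse (by positivity)
      _ = γ * ‖V - W‖ := by field_simp
  refine ⟨key, ?_⟩
  have hcw : ContractingWith ⟨γ, hγ0⟩ T := by
    refine ⟨by exact_mod_cast hγ1, LipschitzWith.of_dist_le_mul fun V W => ?_⟩
    rw [dist_eq_norm, dist_eq_norm]
    exact key V W
  refine ⟨hcw.fixedPoint T, ?_, ?_⟩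
  · intro s
    have := hcw.fixedPoint_isFixedPt
    exact (congrFun this.symm s)
  · intro W hW
    have hfix : Function.IsFixedPt T W := funext fun s => (hW s).symm
    exact hcw.fixedPoint_unique hfix
end

section
/- Let S and A be finite nonempty sets, P a Markov transition kernel, r : S → ℝ, 0 ≤ γ < 1, and k > 0. Let V_k be the unique fixed point of the g-soft Bellman operator and V* the unique fixed point of the exact Bellman optimality operator (with max over actions). Then for every state s, 0 ≤ V_k(s) − V*(s) ≤ log(|A|)/(k·(1−γ)). -/
open Real Finset

theorem gsoft_fixed_point_gap {S A : Type*} [Fintype S] [Nonempty S]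
    [Fintype A] [Nonempty A]
    (P : S → A → S → ℝ) (hP0 : ∀ s a s', 0 ≤ P s a s')
    (hP1 : ∀ s a, ∑ s', P s a s' = 1)
    (r : S → ℝ) (γ : ℝ) (hγ0 : 0 ≤ γ) (hγ1 : γ < 1) (k : ℝ) (hk : 0 < k)
    (Vk Vstar : S → ℝ)
    (hVk : ∀ s, Vk s = (1 / k) * Real.log (∑ a : A,
      Real.exp (k * ∑ s', P s a s' * (r s' + γ * Vk s'))))
    (hVstar : ∀ s, Vstar s = Finset.univ.sup' Finset.univ_nonempty
      (fun a : A => ∑ s', P s a s' * (r s' + γ * Vstar s'))) :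
    ∀ s, 0 ≤ Vk s - Vstar s ∧
      Vk s - Vstar s ≤ Real.log (Fintype.card A) / (k * (1 - γ)) := by
  have hγ' : (0:ℝ) < 1 - γ := by linarith
  have hcard : (0:ℝ) < (Fintype.card A : ℝ) := by
    exact_mod_cast Fintype.card_pos
  have hlogc : 0 ≤ Real.log (Fintype.card A) := by
    apply Real.log_nonneg; exact_mod_cast Fintype.card_pos
  set Qk : S → A → ℝ := fun s a => ∑ s', P s a s' * (r s' + γ * Vk s') with hQkdef
  set Qs : S → A → ℝ := fun s a => ∑ s', P s a s' * (r s' + γ * Vstar s') with hQsdef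
  set D : S → ℝ := fun s => Vk s - Vstar s with hDdef
  set M : ℝ := Finset.univ.sup' Finset.univ_nonempty D with hMdef
  set m : ℝ := Finset.univ.inf' Finset.univ_nonempty D with hmdef
  -- log-sum-exp lower bound
  have hlo : ∀ s, Finset.univ.sup' Finset.univ_nonempty (Qk s) ≤ Vk s := by
    intro s
    rw [hVk s]
    apply Finset.sup'_le
    intro a _
    have h1 : Real.exp (k * Qk s a) ≤ ∑ b : A, Real.exp (k * Qk s b) :=
      Finset.single_le_sum (f := fun b => Real.exp (k * Qk s b))
        (fun b _ => (Real.exp_pos _).le) (Finset.mem_univ a)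
    have h2 : k * Qk s a ≤ Real.log (∑ b : A, Real.exp (k * Qk s b)) := by
      calc k * Qk s a = Real.log (Real.exp (k * Qk s a)) := (Real.log_exp _).symm
        _ ≤ _ := Real.log_le_log (Real.exp_pos _) h1
    rw [one_div, inv_mul_eq_div, le_div_iff₀ hk]
    linarith [h2]
  -- log-sum-exp upper bound
  have hhi : ∀ s, Vk s ≤ Finset.univ.sup' Finset.univ_nonempty (Qk s)
      + Real.log (Fintype.card A) / k := by
    intro s
    set L : ℝ := Finset.univ.sup' Finset.univ_nonempty (Qk s) with hL
    have hsum_le : ∑ b : A, Real.exp (k * Qk s b) ≤ (Fintype.card A : ℝ) * Real.exp (k * L) := by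
      calc ∑ b : A, Real.exp (k * Qk s b)
          ≤ ∑ _b : A, Real.exp (k * L) := by
            apply Finset.sum_le_sum
            intro b _
            exact Real.exp_le_exp.mpr (mul_le_mul_of_nonneg_left
              (Finset.le_sup' (Qk s) (Finset.mem_univ b)) hk.le)
        _ = (Fintype.card A : ℝ) * Real.exp (k * L) := by
            simp [Finset.sum_const, Finset.card_univ, nsmul_eq_mul]
    have hpos : 0 < ∑ b : A, Real.exp (k * Qk s b) :=
      Finset.sum_pos (fun b _ => Real.exp_pos _) Finset.univ_nonempty
    have h3 : Real.log (∑ b : A, Real.exp (k * Qk s b))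
        ≤ Real.log (Fintype.card A) + k * L := by
      have := Real.log_le_log hpos hsum_le
      rwa [Real.log_mul (ne_of_gt hcard) (Real.exp_ne_zero _), Real.log_exp] at this
    rw [hVk s]
    rw [one_div, inv_mul_eq_div, div_le_iff₀ hk]
    have : (L + Real.log (Fintype.card A) / k) * k = Real.log (Fintype.card A) + k * L := by
      field_simp; ring
    rw [this]
    exact h3
  -- P-average of D is between m and M
  have hPD_le : ∀ s a, ∑ s', P s a s' * D s' ≤ M := by
    intro s a
    calc ∑ s', P s a s' * D s' ≤ ∑ s', P s a s' * M := by
          apply Finset.sum_le_sum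
          intro s' _
          exact mul_le_mul_of_nonneg_left (Finset.le_sup' D (Finset.mem_univ s')) (hP0 s a s')
      _ = M := by rw [← Finset.sum_mul, hP1, one_mul]
  have hPD_ge : ∀ s a, m ≤ ∑ s', P s a s' * D s' := by
    intro s a
    calc m = ∑ s', P s a s' * m := by rw [← Finset.sum_mul, hP1, one_mul]
      _ ≤ ∑ s', P s a s' * D s' := by
          apply Finset.sum_le_sum
          intro s' _
          exact mul_le_mul_of_nonneg_left (Finset.inf'_le D (Finset.mem_univ s')) (hP0 s a s')
  -- Qk = Qs + γ * P·D
  have hQdiff : ∀ s a, Qk s a = Qs s a + γ * ∑ s', P s a s' * D s' := by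
    intro s a
    rw [hQkdef, hQsdef, hDdef]
    simp only [Finset.mul_sum, ← Finset.sum_add_distrib]
    apply Finset.sum_congr rfl
    intro s' _
    ring
  -- sup' comparisons
  have hsup_le : ∀ s, Finset.univ.sup' Finset.univ_nonempty (Qk s)
      ≤ Finset.univ.sup' Finset.univ_nonempty (Qs s) + γ * M := by
    intro s
    apply Finset.sup'_le
    intro a _
    have := hQdiff s a
    have h1 : γ * (∑ s', P s a s' * D s') ≤ γ * M :=
      mul_le_mul_of_nonneg_left (hPD_le s a) hγ0
    have h2 : Qs s a ≤ Finset.univ.sup' Finset.univ_nonempty (Qs s) :=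
      Finset.le_sup' (Qs s) (Finset.mem_univ a)
    linarith
  have hsup_ge : ∀ s, Finset.univ.sup' Finset.univ_nonempty (Qs s) + γ * m
      ≤ Finset.univ.sup' Finset.univ_nonempty (Qk s) := by
    intro s
    obtain ⟨a, -, ha⟩ := Finset.exists_mem_eq_sup' Finset.univ_nonempty (Qs s)
    rw [ha]
    have := hQdiff s a
    have h1 : γ * m ≤ γ * ∑ s', P s a s' * D s' :=
      mul_le_mul_of_nonneg_left (hPD_ge s a) hγ0
    have h2 : Qk s a ≤ Finset.univ.sup' Finset.univ_nonempty (Qk s) :=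
      Finset.le_sup' (Qk s) (Finset.mem_univ a)
    linarith
  have hVstar' : ∀ s, Vstar s = Finset.univ.sup' Finset.univ_nonempty (Qs s) := hVstar
  -- m ≥ 0
  have hm0 : 0 ≤ m := by
    obtain ⟨s0, -, hs0⟩ := Finset.exists_mem_eq_inf' Finset.univ_nonempty D
    have h1 : Finset.univ.sup' Finset.univ_nonempty (Qs s0) + γ * m ≤ Vk s0 :=
      le_trans (hsup_ge s0) (hlo s0)
    have h2 : γ * m ≤ D s0 := by
      rw [hDdef]
      simp only
      rw [hVstar' s0]
      linarith
    rw [← hs0] at h2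
    nlinarith
  -- M ≤ log card / (k (1-γ))
  have hM1 : M ≤ Real.log (Fintype.card A) / (k * (1 - γ)) := by
    obtain ⟨s1, -, hs1⟩ := Finset.exists_mem_eq_sup' Finset.univ_nonempty D
    have h1 : Vk s1 ≤ Finset.univ.sup' Finset.univ_nonempty (Qs s1) + γ * M
        + Real.log (Fintype.card A) / k :=
      le_trans (hhi s1) (by linarith [hsup_le s1])
    have h2 : D s1 ≤ γ * M + Real.log (Fintype.card A) / k := by
      rw [hDdef]
      simp only
      rw [hVstar' s1]
      linarith
    rw [← hs1] at h2
    have h3 : M * (1 - γ) ≤ Real.log (Fintype.card A) / k := by nlinarith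
    rw [le_div_iff₀ hk] at h3
    rw [le_div_iff₀ (by positivity : 0 < k * (1 - γ))]
    nlinarith
  intro s
  constructor
  · have := Finset.inf'_le D (Finset.mem_univ s)
    rw [hDdef] at this
    simp only at this
    linarith
  · have := Finset.le_sup' D (Finset.mem_univ s)
    rw [hDdef] at this
    simp only at this
    linarith
end
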